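/- For every positive integer m, log h(m) ≤ ∑_{p^j ∥ divides m, j ≥ 1} 1/p^j, i.e. writing m = ∏_{i=1}^k p_i^{α_i} for its prime factorization, log h(m) ≤ ∑_{i=1}^k ∑_{j=1}^{α_i} 1/p_i^j. -/

import Mathlib

open Finset

private noncomputable def hfun (n : ℕ) : ℝ := ∑ d ∈ n.divisors, (1 : ℝ) / d

private lemma hfun_eq (n : ℕ) (hn : 0 < n) :
    hfun n = (∑ d ∈ n.divisors, (d : ℝ)) / n := by
  unfold hfun
  rw [← Nat.sum_div_divisors n (fun d => (1 : ℝ) / d)]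
  rw [Finset.sum_div]
  refine Finset.sum_congr rfl fun d hd => ?_
  have hdvd : d ∣ n := Nat.dvd_of_mem_divisors hd
  have hd0 : 0 < d := Nat.pos_of_mem_divisors hd
  rw [Nat.cast_div hdvd (by exact_mod_cast hd0.ne')]
  rw [one_div, div_eq_mul_inv, mul_inv, inv_inv]
  ring

private lemma hfun_mult : ∀ x y : ℕ, Nat.Coprime x y → hfun (x * y) = hfun x * hfun y := by
  intro x y hxy
  rcases Nat.eq_zero_or_pos x with rfl | hx
  · simp [hfun]
  rcases Nat.eq_zero_or_pos y with rfl | hy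
  · simp [hfun]
  rw [hfun_eq _ (Nat.mul_pos hx hy), hfun_eq _ hx, hfun_eq _ hy]
  rw [show (∑ d ∈ (x * y).divisors, (d : ℝ)) =
      ((∑ d ∈ (x * y).divisors, d : ℕ) : ℝ) by push_cast; rfl]
  rw [hxy.sum_divisors_mul]
  push_cast
  field_simp

private lemma hfun_pos {n : ℕ} (hn : 0 < n) : 0 < hfun n := by
  unfold hfun
  apply Finset.sum_pos
  · intro d hd
    have := Nat.pos_of_mem_divisors hd
    positivity
  · exact ⟨1, Nat.one_mem_divisors.2 hn.ne'⟩

theorem log_sum_reciprocal_divisors_le (m : ℕ) (hm : 0 < m) :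
    Real.log (∑ d ∈ m.divisors, (1 : ℝ) / d) ≤
      ∑ p ∈ m.primeFactors, ∑ j ∈ Finset.Icc 1 (m.factorization p), (1 : ℝ) / (p : ℝ) ^ j := by
  have hfact := Nat.multiplicative_factorization hfun hfun_mult (by simp [hfun]) hm.ne'
  have hsupp : m.factorization.support = m.primeFactors := Nat.support_factorization m
  rw [show (∑ d ∈ m.divisors, (1 : ℝ) / d) = hfun m from rfl, hfact, Finsupp.prod, hsupp]
  have hppos : ∀ p ∈ m.primeFactors, 0 < hfun (p ^ m.factorization p) := by
    intro p hp
    exact hfun_pos (pow_pos (Nat.Prime.pos (Nat.prime_of_mem_primeFactors hp)) _)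
  rw [Real.log_prod (fun p hp => (hppos p hp).ne')]
  refine Finset.sum_le_sum fun p hp => ?_
  have hprime : p.Prime := Nat.prime_of_mem_primeFactors hp
  set k := m.factorization p with hk
  have hval : hfun (p ^ k) = ∑ i ∈ Finset.range (k + 1), (1 : ℝ) / (p : ℝ) ^ i := by
    unfold hfun
    rw [Nat.sum_divisors_prime_pow hprime]
    push_cast
    rfl
  have hsplit : (∑ i ∈ Finset.range (k + 1), (1 : ℝ) / (p : ℝ) ^ i)
      = 1 + ∑ j ∈ Finset.Icc 1 k, (1 : ℝ) / (p : ℝ) ^ j := by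
    have : Finset.range (k + 1) = insert 0 (Finset.Icc 1 k) := by
      ext i; simp; omega
    rw [this, Finset.sum_insert (by simp)]
    simp
  calc Real.log (hfun (p ^ k)) ≤ hfun (p ^ k) - 1 :=
        Real.log_le_sub_one_of_pos (hppos p hp)
    _ = ∑ j ∈ Finset.Icc 1 k, (1 : ℝ) / (p : ℝ) ^ j := by rw [hval, hsplit]; ring
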